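/- Let B be a nonempty collection of Borel-amenable sets of reductions, and let ⋀B = ⋂B be their intersection. Then ⋀B is a Borel-amenable set of reductions, it is the infimum of B with respect to inclusion, and Δ_{⋀B} = ⋂_{F ∈ B} Δ_F. -/

import Mathlib

open scoped Classical

/-- The standard metric on Baire space: `d x y = (1/2)^m` where `m` is least
with `x m ≠ y m`, and `0` if `x = y`. -/
noncomputable def bd (x y : ℕ → ℕ) : ℝ :=
  if h : x = y then 0 else (1 / 2 : ℝ) ^ (Nat.find (Function.ne_iff.mp h))

/-- `f` is Lipschitz with constant `C` with respect to `bd`. -/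
def LipWith (C : ℝ) (f : (ℕ → ℕ) → ℕ → ℕ) : Prop :=
  ∀ x y, bd (f x) (f y) ≤ C * bd x y

/-- The set of all Lipschitz functions (of any constant `2^k`, `k ∈ ℤ`). -/
def Lip : Set ((ℕ → ℕ) → ℕ → ℕ) := {f | ∃ k : ℤ, LipWith ((2 : ℝ) ^ k) f}

/-- `A` is `F`-reducible to `B`. -/
def Red (F : Set ((ℕ → ℕ) → (ℕ → ℕ))) (A B : Set (ℕ → ℕ)) : Prop :=
  ∃ f ∈ F, A = f ⁻¹' B

/-- The basic clopen set `N_⟨0⟩`. -/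
def N0 : Set (ℕ → ℕ) := {x | x 0 = 0}

/-- The characteristic set of `F`. -/
def Delta (F : Set ((ℕ → ℕ) → (ℕ → ℕ))) : Set (Set (ℕ → ℕ)) :=
  {A | Red F A N0}

/-- `F` is a Borel-amenable set of reductions: a set of Borel functions on Baire
space, closed under composition, containing all Lipschitz functions, and closed
under piecewise combinations along `Δ_F`-partitions. -/
def BorelAmenable (F : Set ((ℕ → ℕ) → (ℕ → ℕ))) : Prop :=
  (∀ f ∈ F, ∀ g ∈ F, f ∘ g ∈ F) ∧
  (∀ f ∈ F, Measurable f) ∧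
  Lip ⊆ F ∧
  (∀ (D : ℕ → Set (ℕ → ℕ)) (fs : ℕ → (ℕ → ℕ) → ℕ → ℕ) (g : (ℕ → ℕ) → ℕ → ℕ),
    (∀ n, D n ∈ Delta F) → Pairwise (Function.onFun Disjoint D) → (⋃ n, D n) = Set.univ →
    (∀ n, fs n ∈ F) → (∀ n, ∀ x ∈ D n, g x = fs n x) → g ∈ F)

lemma bd_nonneg (x y : ℕ → ℕ) : 0 ≤ bd x y := by
  unfold bd; split
  · exact le_refl 0
  · positivity

lemma bd_le_one (x y : ℕ → ℕ) : bd x y ≤ 1 := by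
  unfold bd; split
  · norm_num
  · exact pow_le_one₀ (by norm_num) (by norm_num)

lemma bd_self (x : ℕ → ℕ) : bd x x = 0 := by simp [bd]

/-- Constant functions are Lipschitz. -/
lemma const_mem_lip (c : ℕ → ℕ) : (fun _ : ℕ → ℕ => c) ∈ Lip := by
  refine ⟨0, fun x y => ?_⟩
  rw [bd_self]
  have := bd_nonneg x y
  simp; linarith

/-- The "swap 0" function is Lipschitz. -/
lemma s_mem_lip : (fun x : ℕ → ℕ => fun _ : ℕ => if x 0 = 0 then 1 else 0) ∈ Lip := by
  refine ⟨0, fun x y => ?_⟩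
  simp only [zpow_zero, one_mul]
  by_cases h : x 0 = y 0
  · have : (fun _ : ℕ => if x 0 = 0 then 1 else 0) = (fun _ : ℕ => if y 0 = 0 then 1 else 0) := by
      rw [h]
    rw [this, bd_self]
    exact bd_nonneg x y
  · have hxy : x ≠ y := fun e => h (by rw [e])
    have : bd x y = 1 := by
      unfold bd
      rw [dif_neg hxy]
      have h0 : Nat.find (Function.ne_iff.mp hxy) = 0 :=
        Nat.le_zero.mp (Nat.find_le h)
      rw [h0, pow_zero]
    rw [this]
    exact bd_le_one _ _

lemma empty_mem_Delta {F : Set ((ℕ → ℕ) → (ℕ → ℕ))} (hF : BorelAmenable F) :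
    (∅ : Set (ℕ → ℕ)) ∈ Delta F := by
  refine ⟨fun _ => fun _ => 1, hF.2.2.1 (const_mem_lip _), ?_⟩
  ext x; simp [N0]

lemma compl_mem_Delta {F : Set ((ℕ → ℕ) → (ℕ → ℕ))} (hF : BorelAmenable F)
    {A : Set (ℕ → ℕ)} (hA : A ∈ Delta F) : Aᶜ ∈ Delta F := by
  obtain ⟨f, hf, rfl⟩ := hA
  refine ⟨(fun x : ℕ → ℕ => fun _ : ℕ => if x 0 = 0 then 1 else 0) ∘ f,
    hF.1 _ (hF.2.2.1 s_mem_lip) _ hf, ?_⟩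
  ext x
  by_cases h : f x 0 = 0 <;> simp [N0, h]

theorem stmt19 (B : Set (Set ((ℕ → ℕ) → (ℕ → ℕ)))) (hne : B.Nonempty)
    (hB : ∀ F ∈ B, BorelAmenable F) :
    BorelAmenable (⋂₀ B) ∧
    (∀ F ∈ B, ⋂₀ B ⊆ F) ∧
    (∀ G : Set ((ℕ → ℕ) → (ℕ → ℕ)), (∀ F ∈ B, G ⊆ F) → G ⊆ ⋂₀ B) ∧
    Delta (⋂₀ B) = ⋂ F ∈ B, Delta F := by
  obtain ⟨F₀, hF₀⟩ := hne
  have hsub : ∀ F ∈ B, ⋂₀ B ⊆ F := fun F hF _ hx => hx F hF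
  refine ⟨⟨?_, ?_, ?_, ?_⟩, hsub, fun G hG x hx F hF => hG F hF hx, ?_⟩
  · intro f hf g hg F hF
    exact (hB F hF).1 f (hf F hF) g (hg F hF)
  · intro f hf
    exact (hB F₀ hF₀).2.1 f (hf F₀ hF₀)
  · intro f hf F hF
    exact (hB F hF).2.2.1 hf
  · intro D fs g hD hdisj huniv hfs hg F hF
    refine (hB F hF).2.2.2 D fs g (fun n => ?_) hdisj huniv (fun n => hfs n F hF) hg
    obtain ⟨h, hh, hDn⟩ := hD n
    exact ⟨h, hh F hF, hDn⟩
  · ext A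
    simp only [Set.mem_iInter]
    constructor
    · rintro ⟨f, hf, rfl⟩ F hF
      exact ⟨f, hf F hF, rfl⟩
    · intro hA
      -- the canonical characteristic function of A
      set g : (ℕ → ℕ) → ℕ → ℕ := fun x => fun _ => if x ∈ A then 0 else 1 with hgdef
      have hgmem : g ∈ ⋂₀ B := by
        intro F hF
        refine (hB F hF).2.2.2
          (fun n => if n = 0 then A else if n = 1 then Aᶜ else ∅)
          (fun n => if n = 0 then (fun _ => fun _ => 0) else (fun _ => fun _ => 1)) g
          ?_ ?_ ?_ ?_ ?_
        · intro n
          rcases n with _ | _ | n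
          · simpa using hA F hF
          · simpa using compl_mem_Delta (hB F hF) (hA F hF)
          · simpa using empty_mem_Delta (hB F hF)
        · intro m n hmn
          simp only [Function.onFun]
          rcases m with _ | _ | m <;> rcases n with _ | _ | n <;>
            simp_all [Set.disjoint_left]
        · ext x
          simp only [Set.mem_iUnion, Set.mem_univ, iff_true]
          by_cases hx : x ∈ A
          · exact ⟨0, by simpa using hx⟩
          · exact ⟨1, by simpa using hx⟩
        · intro n
          rcases n with _ | n
          · exact (hB F hF).2.2.1 (const_mem_lip _)
          · exact (hB F hF).2.2.1 (const_mem_lip _)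
        · intro n x hx
          rcases n with _ | _ | n
          · have hx' : x ∈ A := by simpa using hx
            simp [hgdef, hx']
          · simp only at hx ⊢
            have : x ∉ A := by simpa using hx
            simp [hgdef, this]
          · simp at hx
      refine ⟨g, hgmem, ?_⟩
      ext x
      by_cases hx : x ∈ A <;> simp [N0, hgdef, hx]
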